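/- arXiv:2006.04485 — 3 statements merged into one kernel-verified Lean document; each statement's English description precedes it below -/
import Mathlib

section
/- Let (X_n) be a sequence of non-empty sets and, for each k, n ∈ ℕ, let f_n^{(k)} : X_n → [0,∞] be a function. Define f^{(k)} : ∏_n X_n → [0,∞] by f^{(k)}(x₁, x₂, …) = limsup_n f_n^{(k)}(x_n). If for every ε > 0 and every k₀ ∈ ℕ there exists x ∈ ∏_n X_n such that f^{(k)}(x) < ε for all k = 1, …, k₀, then there exists y ∈ ∏_n X_n such that f^{(k)}(y) = 0 for all k ∈ ℕ. -/
open Filter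

/-- **Kirchberg's ε-test** (sequence-algebra form). -/
theorem kirchberg_eps_test (X : ℕ → Type*) (hX : ∀ n, Nonempty (X n))
    (f : ℕ → ∀ n, X n → ENNReal)
    (H : ∀ ε : ENNReal, 0 < ε → ∀ k₀ : ℕ, ∃ x : ∀ n, X n,
      ∀ k ≤ k₀, Filter.limsup (fun n => f k n (x n)) atTop < ε) :
    ∃ y : ∀ n, X n, ∀ k : ℕ, Filter.limsup (fun n => f k n (y n)) atTop = 0 := by
  classical
  have key : ∀ m : ℕ, ∃ x : ∀ n, X n, ∃ N : ℕ,
      ∀ k ≤ m, ∀ n ≥ N, f k n (x n) < 2⁻¹ ^ m := by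
    intro m
    obtain ⟨x, hx⟩ := H (2⁻¹ ^ m) (ENNReal.pow_pos (by norm_num) m) m
    have h2 : ∀ᶠ n in atTop, ∀ k ∈ Set.Iic m, f k n (x n) < 2⁻¹ ^ m := by
      rw [eventually_all_finite (Set.finite_Iic m)]
      intro k hk
      exact eventually_lt_of_limsup_lt (hx k hk)
    obtain ⟨N, hN⟩ := eventually_atTop.1 h2
    exact ⟨x, N, fun k hk n hn => hN n hn k hk⟩
  choose x N hxN using key
  set N' : ℕ → ℕ := fun m => Nat.rec (N 0) (fun m ih => max (N (m + 1)) (ih + 1)) m with hN'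
  have hN'le : ∀ m, N m ≤ N' m := by
    intro m; cases m with
    | zero => exact le_refl _
    | succ m => exact le_max_left _ _
  have hN'ge : ∀ m, m ≤ N' m := by
    intro m
    induction m with
    | zero => exact Nat.zero_le _
    | succ m ih => exact le_trans (Nat.succ_le_succ ih) (le_max_right _ _)
  set g : ℕ → ℕ := fun n => Nat.findGreatest (fun m => N' m ≤ n) n with hg
  refine ⟨fun n => x (g n) n, ?_⟩
  intro k
  have hle : ∀ m, k ≤ m → limsup (fun n => f k n (x (g n) n)) atTop ≤ 2⁻¹ ^ m := by
    intro m hm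
    apply limsup_le_of_le (by isBoundedDefault)
    filter_upwards [eventually_ge_atTop (N' m)] with n hn
    have hmn : m ≤ n := le_trans (hN'ge m) hn
    have hgm : m ≤ g n := Nat.le_findGreatest hmn hn
    have hgn : N' (g n) ≤ n := Nat.findGreatest_spec (P := fun m => N' m ≤ n) hmn hn
    have h1 := hxN (g n) k (le_trans hm hgm) n (le_trans (hN'le _) hgn)
    refine le_trans h1.le ?_
    exact pow_le_pow_of_le_one zero_le (by norm_num) hgm
  by_contra h
  obtain ⟨m, hm⟩ := ENNReal.exists_inv_two_pow_lt h
  have := hle (max m k) (le_max_right _ _)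
  have h2 : (2 : ENNReal)⁻¹ ^ (max m k) ≤ 2⁻¹ ^ m :=
    pow_le_pow_of_le_one zero_le (by norm_num) (le_max_left _ _)
  exact absurd (lt_of_le_of_lt (le_trans this h2) hm) (lt_irrefl _)
end

section
/- Let n ≥ 1 and let a ∈ M_n(ℂ) be self-adjoint. Then there exist a self-adjoint c ∈ M_n(ℂ) with ‖c‖ ≤ |tr_n(a)| and matrices x, y ∈ M_n(ℂ) such that a = c + [x, y], where tr_n is the normalized trace and [x, y] = xy − yx. In fact one may take c = tr_n(a)·1. -/
open scoped Matrix.Norms.L2Operator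

section
open Matrix Finset

lemma diagonal_traceless_is_commutator (n : ℕ) (d : Fin n → ℂ) (hd : ∑ i, d i = 0) :
    ∃ X Y : Matrix (Fin n) (Fin n) ℂ, Matrix.diagonal d = X * Y - Y * X := by
  classical
  set s : Fin n → ℂ := fun i => ∑ j : Fin n, if (j : ℕ) ≤ (i : ℕ) then d j else 0 with hs
  set s' : Fin n → ℂ := fun i => ∑ j : Fin n, if (j : ℕ) < (i : ℕ) then d j else 0 with hs'
  refine ⟨Matrix.of fun i j => if (i : ℕ) + 1 = (j : ℕ) then s i else 0,
          Matrix.of fun i j => if (j : ℕ) + 1 = (i : ℕ) then 1 else 0, ?_⟩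
  -- s at the last index is the full (zero) trace
  have hslast : ∀ i : Fin n, (i : ℕ) + 1 = n → s i = 0 := by
    intro i hi
    rw [hs]
    calc (∑ j : Fin n, if (j : ℕ) ≤ (i : ℕ) then d j else 0) = ∑ j, d j := by
          refine Finset.sum_congr rfl fun j _ => ?_
          rw [if_pos (by omega : (j : ℕ) ≤ (i : ℕ))]
      _ = 0 := hd
  -- XY computation
  have hXY : ∀ i j : Fin n,
      (∑ k : Fin n, (if (i : ℕ) + 1 = (k : ℕ) then s i else 0) *
            (if (j : ℕ) + 1 = (k : ℕ) then (1 : ℂ) else 0)) =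
      if i = j then s i else 0 := by
    intro i j
    by_cases hij : i = j
    · subst hij
      rw [if_pos rfl]
      by_cases h : (i : ℕ) + 1 < n
      · rw [Finset.sum_eq_single (⟨(i : ℕ) + 1, h⟩ : Fin n)]
        · simp
        · intro k _ hk
          rw [if_neg, zero_mul]
          intro hc
          exact hk (Fin.ext hc.symm)
        · simp
      · have : (i : ℕ) + 1 = n := by omega
        rw [hslast i this]
        apply Finset.sum_eq_zero
        intro k _
        rw [if_neg (by omega : ¬ (i : ℕ) + 1 = (k : ℕ)), zero_mul]
    · rw [if_neg hij]
      apply Finset.sum_eq_zero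
      intro k _
      rcases eq_or_ne ((i : ℕ) + 1) ((k : ℕ)) with h1 | h1
      · rw [if_pos h1, if_neg (show ¬ ((j:ℕ) + 1 = (k:ℕ)) from
          fun h2 => hij (Fin.ext (by omega))), mul_zero]
      · rw [if_neg h1, zero_mul]
  -- YX computation
  have hYX : ∀ i j : Fin n,
      (∑ k : Fin n, (if (k : ℕ) + 1 = (i : ℕ) then (1 : ℂ) else 0) *
            (if (k : ℕ) + 1 = (j : ℕ) then s k else 0)) =
      if i = j then s' i else 0 := by
    intro i j
    by_cases hij : i = j
    · subst hij
      rw [if_pos rfl]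
      by_cases h : 1 ≤ (i : ℕ)
      · have hlt : (i : ℕ) - 1 < n := by have := i.isLt; omega
        rw [Finset.sum_eq_single (⟨(i : ℕ) - 1, hlt⟩ : Fin n)]
        · rw [if_pos (by simp; omega), if_pos (by simp; omega), one_mul]
          rw [hs, hs']
          refine Finset.sum_congr rfl fun j _ => ?_
          congr 1
          simp only [eq_iff_iff]
          omega
        · intro k _ hk
          rw [if_neg, zero_mul]
          intro hc
          exact hk (Fin.ext (by simp only [Fin.val_mk]; omega))
        · simp
      · have hi0 : (i : ℕ) = 0 := by omega
        have : s' i = 0 := by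
          rw [hs']
          apply Finset.sum_eq_zero
          intro k _
          rw [if_neg (by omega)]
        rw [this]
        apply Finset.sum_eq_zero
        intro k _
        rw [if_neg (by omega : ¬ (k : ℕ) + 1 = (i : ℕ)), zero_mul]
    · rw [if_neg hij]
      apply Finset.sum_eq_zero
      intro k _
      rcases eq_or_ne ((k : ℕ) + 1) ((i : ℕ)) with h1 | h1
      · rw [if_pos h1, if_neg (show ¬ ((k:ℕ) + 1 = (j:ℕ)) from
          fun h2 => hij (Fin.ext (by omega))), mul_zero]
      · rw [if_neg h1, zero_mul]
  ext i j
  rw [Matrix.sub_apply, Matrix.mul_apply, Matrix.mul_apply]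
  simp only [Matrix.of_apply]
  rw [hXY i j, hYX i j, Matrix.diagonal_apply]
  by_cases hij : i = j
  · subst hij
    rw [if_pos rfl, if_pos rfl, if_pos rfl, hs, hs', ← Finset.sum_sub_distrib]
    rw [Finset.sum_eq_single i]
    · simp
    · intro k _ hk
      have : (k : ℕ) ≠ (i : ℕ) := fun h => hk (Fin.ext h)
      by_cases h1 : (k : ℕ) ≤ (i : ℕ)
      · rw [if_pos h1, if_pos (by omega), sub_self]
      · rw [if_neg h1, if_neg (by omega), sub_self]
    · simp
  · rw [if_neg hij, if_neg hij, if_neg hij, sub_zero]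


end

/-- A self-adjoint matrix is, up to a scalar multiple of the identity of norm at most
`|tr_n(a)|`, a single commutator: `a = c + [x, y]` with `c = tr_n(a)·1`. -/
theorem selfadjoint_matrix_eq_scalar_add_commutator (n : ℕ) (hn : 1 ≤ n)
    (a : Matrix (Fin n) (Fin n) ℂ) (ha : IsSelfAdjoint a) :
    ∃ c x y : Matrix (Fin n) (Fin n) ℂ, IsSelfAdjoint c ∧
      ‖c‖ ≤ ‖(1 / (n : ℂ)) * Matrix.trace a‖ ∧
      a = c + (x * y - y * x) ∧
      c = ((1 / (n : ℂ)) * Matrix.trace a) • (1 : Matrix (Fin n) (Fin n) ℂ) := by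
  classical
  haveI : Nonempty (Fin n) := ⟨⟨0, hn⟩⟩
  have hA : a.IsHermitian := ha
  set t : ℂ := (1 / (n : ℂ)) * Matrix.trace a with ht
  set U : Matrix (Fin n) (Fin n) ℂ := (hA.eigenvectorUnitary : Matrix (Fin n) (Fin n) ℂ)
    with hUdef
  have hU1 : U * star U = 1 :=
    Matrix.mem_unitaryGroup_iff.mp hA.eigenvectorUnitary.2
  have hU2 : star U * U = 1 :=
    Matrix.mem_unitaryGroup_iff'.mp hA.eigenvectorUnitary.2
  set g : Fin n → ℂ := RCLike.ofReal ∘ hA.eigenvalues with hg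
  have hspec : a = U * Matrix.diagonal g * star U := hA.spectral_theorem
  have hnne : (n : ℂ) ≠ 0 := by
    exact_mod_cast Nat.cast_ne_zero.mpr (by omega)
  -- trace of a equals the sum of g
  have htrace : Matrix.trace a = ∑ i, g i := by
    rw [hspec, Matrix.trace_mul_cycle, hU2, one_mul, Matrix.trace_diagonal]
  -- the shifted eigenvalue function has zero sum
  obtain ⟨X, Y, hXY⟩ := diagonal_traceless_is_commutator n (fun i => g i - t) (by
    rw [Finset.sum_sub_distrib, Finset.sum_const, ← htrace, Finset.card_univ,
      Fintype.card_fin, ht]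
    field_simp
    rw [nsmul_eq_mul, mul_div_cancel₀ _ hnne, sub_self])
  -- star t = t
  have hstar_tr : star (Matrix.trace a) = Matrix.trace a := by
    have h1 : Matrix.trace (Matrix.conjTranspose a) = star (Matrix.trace a) :=
      Matrix.trace_conjTranspose a
    rw [hA.eq] at h1
    exact h1.symm
  have hstar_t : star t = t := by
    rw [ht, star_mul', hstar_tr]
    congr 1
    simp
  refine ⟨t • 1, U * X * star U, U * Y * star U, ?_, ?_, ?_, rfl⟩
  · exact (show _root_.IsSelfAdjoint t from hstar_t).smul
      (show _root_.IsSelfAdjoint (1 : Matrix (Fin n) (Fin n) ℂ) from star_one _)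
  · haveI : Nontrivial (Matrix (Fin n) (Fin n) ℂ) := inferInstance
    rw [norm_smul, CStarRing.norm_one, mul_one]
  · have hconj : ∀ P Q : Matrix (Fin n) (Fin n) ℂ,
        (U * P * star U) * (U * Q * star U) = U * (P * Q) * star U := by
      intro P Q
      calc (U * P * star U) * (U * Q * star U)
          = U * P * (star U * U) * Q * star U := by
            simp only [Matrix.mul_assoc]
        _ = U * (P * Q) * star U := by rw [hU2]; simp only [Matrix.mul_assoc, Matrix.mul_one,
            Matrix.one_mul]
    rw [hconj, hconj, ← Matrix.sub_mul, ← Matrix.mul_sub, ← hXY]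
    have hdiag : Matrix.diagonal (fun i => g i - t) = Matrix.diagonal g - t • 1 := by
      ext i j
      rcases eq_or_ne i j with rfl | h
      · simp
      · simp [Matrix.diagonal_apply_ne _ h, Matrix.one_apply_ne h]
    rw [hdiag, Matrix.mul_sub, Matrix.sub_mul, Matrix.mul_smul, Matrix.smul_mul,
      Matrix.mul_one, hU1, ← hspec]
    abel
end

section
/- Let B be a C*-algebra, let S be a finite set of tracial states on B, and for x ∈ B set ‖x‖_{2,S} := sup_{τ ∈ S} ‖x‖_{2,τ}. Suppose e₁, …, e_k ∈ B are pairwise orthogonal projections (in a unitization if B is non-unital, with Σ e_i = 1) commuting with elements a₁, …, a_k ∈ B, and suppose τ(e_i a_i* a_i) ≤ ε² τ(e_i) for all τ ∈ S and all i. Then ‖Σ_{i=1}^k e_i a_i‖_{2,τ} ≤ ε for every τ ∈ S. -/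
/-- A tracial state on a C*-algebra. -/
def IsTracialState {A : Type*} [NormedRing A] [StarRing A] [CStarRing A]
    [NormedAlgebra ℂ A] [CompleteSpace A] [StarModule ℂ A] (τ : A →L[ℂ] ℂ) : Prop :=
  ‖τ‖ = 1 ∧ (∀ a : A, 0 ≤ (τ (star a * a)).re ∧ (τ (star a * a)).im = 0) ∧
    ∀ a b : A, τ (a * b) = τ (b * a)

/-- The CPoU gluing estimate: if pairwise orthogonal projections `e_i` summing to `1`
commute with elements `a_i` and `τ(e_i a_i* a_i) ≤ ε² τ(e_i)` for all `τ` in a finite set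
`S` of tracial states, then `‖Σ e_i a_i‖_{2,τ} ≤ ε` for every `τ ∈ S`. -/
theorem cpou_gluing_estimate {B : Type*} [NormedRing B] [StarRing B] [CStarRing B]
    [NormedAlgebra ℂ B] [CompleteSpace B] [StarModule ℂ B]
    (S : Finset (B →L[ℂ] ℂ)) (hS : ∀ τ ∈ S, IsTracialState τ)
    (ε : ℝ) (hε : 0 ≤ ε) (k : ℕ) (e a : Fin k → B)
    (he_proj : ∀ i, IsSelfAdjoint (e i) ∧ e i * e i = e i)
    (he_orth : ∀ i j, i ≠ j → e i * e j = 0)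
    (he_sum : ∑ i, e i = 1)
    (hcomm : ∀ i j, Commute (e i) (a j))
    (hest : ∀ τ ∈ S, ∀ i,
      (τ (e i * (star (a i) * a i))).re ≤ ε ^ 2 * (τ (e i)).re) :
    ∀ τ ∈ S, Real.sqrt ((τ (star (∑ i, e i * a i) * (∑ i, e i * a i))).re) ≤ ε := by
  intro τ hτ
  -- key algebraic identity
  have hstar_comm : ∀ i, star (a i) * e i = e i * star (a i) := by
    intro i
    have h := ((hcomm i i).symm.star_star)
    rwa [(he_proj i).1.star_eq] at h
  have hx : star (∑ i, e i * a i) * (∑ i, e i * a i)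
      = ∑ i, e i * (star (a i) * a i) := by
    rw [star_sum, Finset.sum_mul_sum]
    refine Finset.sum_congr rfl fun i _ => ?_
    rw [Finset.sum_eq_single i]
    · rw [star_mul, (he_proj i).1.star_eq]
      calc star (a i) * e i * (e i * a i)
          = star (a i) * (e i * e i) * a i := by simp [mul_assoc]
        _ = star (a i) * e i * a i := by rw [(he_proj i).2]
        _ = e i * star (a i) * a i := by rw [hstar_comm i]
        _ = e i * (star (a i) * a i) := by rw [mul_assoc]
    · intro j _ hj
      rw [star_mul, (he_proj i).1.star_eq]
      have : e i * (e j * a j) = 0 := by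
        rw [← mul_assoc, he_orth i j (fun h => hj h.symm), zero_mul]
      rw [mul_assoc, this, mul_zero]
    · intro h; exact absurd (Finset.mem_univ i) h
  have hone : ‖(1 : B)‖ ≤ 1 := by
    have h := CStarRing.norm_star_mul_self (x := (1 : B))
    rw [star_one, one_mul] at h
    nlinarith [norm_nonneg (1 : B)]
  have hτ1 : (τ 1).re ≤ 1 := by
    calc (τ 1).re ≤ ‖τ 1‖ := Complex.re_le_norm _
      _ ≤ ‖τ‖ * ‖(1 : B)‖ := τ.le_opNorm 1
      _ ≤ 1 * 1 := by
          have := (hS τ hτ).1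
          exact mul_le_mul (le_of_eq this) hone (norm_nonneg _) (by simp [this])
      _ = 1 := one_mul 1
  have key : (τ (star (∑ i, e i * a i) * (∑ i, e i * a i))).re ≤ ε ^ 2 := by
    rw [hx, map_sum, Complex.re_sum]
    calc ∑ i, (τ (e i * (star (a i) * a i))).re
        ≤ ∑ i, ε ^ 2 * (τ (e i)).re := Finset.sum_le_sum fun i _ => hest τ hτ i
      _ = ε ^ 2 * (τ 1).re := by
          rw [← Finset.mul_sum, ← Complex.re_sum, ← map_sum, he_sum]
      _ ≤ ε ^ 2 * 1 := by nlinarith [sq_nonneg ε]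
      _ = ε ^ 2 := mul_one _
  calc Real.sqrt ((τ (star (∑ i, e i * a i) * (∑ i, e i * a i))).re)
      ≤ Real.sqrt (ε ^ 2) := Real.sqrt_le_sqrt key
    _ = ε := by rw [Real.sqrt_sq hε]
end
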